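/- For all integers n ≥ 2, m ≥ 1 and 0 ≤ r ≤ m−1, the set B = {c_m(i') : i' ∈ {0,…,n−1}^m, wt(i') ≥ r+1} is an F_2-basis of the Berman code D_n(r,m). -/

import Mathlib

open Finset

/-- The `l`-th subvector in the concatenation decomposition:
`(subvec v l) i' = v (i'|l)`. -/
def subvec {n m : ℕ} (v : (Fin (m + 1) → Fin n) → ZMod 2) (l : Fin n) :
    (Fin m → Fin n) → ZMod 2 :=
  fun i' => v (Fin.snoc i' l)

/-- The Berman code `D_n(r,m)`, defined recursively. -/
def BermanD (n : ℕ) : (m : ℕ) → ℕ → Set ((Fin m → Fin n) → ZMod 2)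
  | 0, _ => {0}
  | m + 1, r =>
    if r = 0 then {v | ∑ i, v i = 0}
    else if m + 1 ≤ r then {0}
    else {v | (∀ l : Fin n, subvec v l ∈ BermanD n m (r - 1)) ∧
              (fun i' => ∑ l : Fin n, subvec v l i') ∈ BermanD n m r}

/-- The dual Berman code `C_n(r,m)`, defined recursively. -/
def BermanC (n : ℕ) : (m : ℕ) → ℕ → Set ((Fin m → Fin n) → ZMod 2)
  | 0, _ => Set.univ
  | m + 1, r =>
    if r = 0 then {v | ∃ c : ZMod 2, ∀ i, v i = c}
    else if m + 1 ≤ r then Set.univ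
    else {v | ∃ (u : (Fin m → Fin n) → ZMod 2) (w : Fin n → (Fin m → Fin n) → ZMod 2),
            u ∈ BermanC n m r ∧
            (∀ l : Fin n, (l : ℕ) < n - 1 → w l ∈ BermanC n m (r - 1)) ∧
            (∀ l : Fin n, (l : ℕ) = n - 1 → w l = 0) ∧
            (∀ l : Fin n, subvec v l = u + w l)}

/-- Hamming weight of a binary vector. -/
def hwt {n m : ℕ} (v : (Fin m → Fin n) → ZMod 2) : ℕ :=
  (Finset.univ.filter fun i => v i ≠ 0).card

/-- `preceq j i` means `j ⪯ i`: for every position `k`, either `j k = 0` or `j k = i k`. -/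
def preceq {n m : ℕ} (j i : Fin m → Fin n) : Prop :=
  ∀ k, (j k : ℕ) = 0 ∨ j k = i k

instance {n m : ℕ} (j i : Fin m → Fin n) : Decidable (preceq j i) :=
  inferInstanceAs (Decidable (∀ k, (j k : ℕ) = 0 ∨ j k = i k))

/-- Hamming weight of an index tuple. -/
def wtTuple {n m : ℕ} (i : Fin m → Fin n) : ℕ :=
  (Finset.univ.filter fun k => (i k : ℕ) ≠ 0).card

/-- The vector `c_m(i')`: the indicator of `{i : i ⪯ i'}`. -/
def cVec {n : ℕ} (m : ℕ) (i' : Fin m → Fin n) : (Fin m → Fin n) → ZMod 2 :=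
  fun i => if preceq i i' then 1 else 0

/-- The vector `d_m(i')`: the indicator of `{i : i' ⪯ i}`. -/
def dVec {n : ℕ} (m : ℕ) (i' : Fin m → Fin n) : (Fin m → Fin n) → ZMod 2 :=
  fun i => if preceq i' i then 1 else 0

/-- The matrix `A_m = A_1^{⊗m}`: its entry in row `i` and column `j` is `1` iff `j ⪯ i`. -/
def Amat (n m : ℕ) : Matrix (Fin m → Fin n) (Fin m → Fin n) (ZMod 2) :=
  fun i j => if preceq j i then 1 else 0

/-! ### Auxiliary lemmas -/

section Aux

variable {n m : ℕ}

lemma fin_val_zero_iff [NeZero n] (a : Fin n) : (a : ℕ) = 0 ↔ a = 0 :=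
  ⟨fun h => Fin.ext (by simp [h]), fun h => by simp [h]⟩

lemma preceq_refl (a : Fin m → Fin n) : preceq a a := fun _ => Or.inr rfl

lemma preceq_trans {a b c : Fin m → Fin n} (h1 : preceq a b) (h2 : preceq b c) :
    preceq a c := by
  intro p
  rcases h1 p with h | h
  · exact Or.inl h
  rcases h2 p with h' | h'
  · left; rw [h, h']
  · right; rw [h, h']

lemma subvec_zero (l : Fin n) : subvec (0 : (Fin (m+1) → Fin n) → ZMod 2) l = 0 := rfl

lemma subvec_add (u v : (Fin (m+1) → Fin n) → ZMod 2) (l : Fin n) :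
    subvec (u + v) l = subvec u l + subvec v l := rfl

lemma zero_mem_D (n m r : ℕ) : (0 : (Fin m → Fin n) → ZMod 2) ∈ BermanD n m r := by
  induction m generalizing r with
  | zero => simp [BermanD]
  | succ m ih =>
    rw [BermanD]
    split_ifs
    · simp
    · simp
    · refine ⟨fun l => ih _, ?_⟩
      have h : (fun i' => ∑ l : Fin n, subvec (0 : (Fin (m+1) → Fin n) → ZMod 2) l i')
          = (0 : (Fin m → Fin n) → ZMod 2) := by
        funext i'; simp [subvec]
      rw [h]; exact ih _

lemma add_mem_D (n m r : ℕ) {u v : (Fin m → Fin n) → ZMod 2}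
    (hu : u ∈ BermanD n m r) (hv : v ∈ BermanD n m r) : u + v ∈ BermanD n m r := by
  induction m generalizing r with
  | zero =>
    simp only [BermanD, Set.mem_singleton_iff] at hu hv ⊢
    simp [hu, hv]
  | succ m ih =>
    rw [BermanD] at hu hv ⊢
    split_ifs at hu hv ⊢ with h0 h1
    · simp only [Set.mem_setOf_eq] at *
      simp [Finset.sum_add_distrib, hu, hv]
    · simp only [Set.mem_singleton_iff] at *
      simp [hu, hv]
    · simp only [Set.mem_setOf_eq] at *
      refine ⟨fun l => ih _ (hu.1 l) (hv.1 l), ?_⟩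
      have h : (fun i' => ∑ l : Fin n, subvec (u + v) l i')
          = (fun i' => ∑ l : Fin n, subvec u l i') + (fun i' => ∑ l : Fin n, subvec v l i') := by
        funext i'; simp [subvec, Finset.sum_add_distrib]
      rw [h]; exact ih _ hu.2 hv.2

/-- `BermanD` as a submodule. -/
def Dmod (n m r : ℕ) : Submodule (ZMod 2) ((Fin m → Fin n) → ZMod 2) where
  carrier := BermanD n m r
  zero_mem' := zero_mem_D n m r
  add_mem' := add_mem_D n m r
  smul_mem' := by
    intro c v hv
    rcases (by decide : ∀ c : ZMod 2, c = 0 ∨ c = 1) c with rfl | rfl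
    · simpa using zero_mem_D n m r
    · simpa using hv

lemma preceq_snoc_iff (a j : Fin m → Fin n) (b l : Fin n) :
    preceq (Fin.snoc a b) (Fin.snoc j l) ↔ preceq a j ∧ ((b : ℕ) = 0 ∨ b = l) := by
  constructor
  · intro h
    refine ⟨fun k => ?_, ?_⟩
    · have := h (Fin.castSucc k); simpa using this
    · have := h (Fin.last m); simpa using this
  · rintro ⟨h1, h2⟩ k
    refine Fin.lastCases ?_ (fun k' => ?_) k
    · simpa using h2
    · simpa using h1 k'

lemma wtTuple_snoc (j : Fin m → Fin n) (l : Fin n) :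
    wtTuple (Fin.snoc j l) = wtTuple j + if (l : ℕ) ≠ 0 then 1 else 0 := by
  unfold wtTuple
  rw [Finset.card_filter, Finset.card_filter, Fin.sum_univ_castSucc]
  simp

lemma wtTuple_le (i : Fin m → Fin n) : wtTuple i ≤ m :=
  (Finset.card_filter_le _ _).trans (by simp)

lemma subvec_cVec_snoc (j : Fin m → Fin n) (l b : Fin n) :
    subvec (cVec (m+1) (Fin.snoc j l)) b
      = if ((b : ℕ) = 0 ∨ b = l) then cVec m j else 0 := by
  funext i'
  show (if preceq (Fin.snoc i' b) (Fin.snoc j l) then (1:ZMod 2) else 0) = _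
  simp only [preceq_snoc_iff, ite_apply, Pi.zero_apply, cVec]
  by_cases hb : (b : ℕ) = 0 ∨ b = l <;> by_cases hp : preceq i' j <;> simp [hp, hb]

/-- the filter set of `preceq · i'` is a box. -/
lemma filter_preceq_eq [NeZero n] (i' : Fin m → Fin n) :
    (Finset.univ.filter fun i : Fin m → Fin n => preceq i i')
      = Fintype.piFinset (fun k => ({0, i' k} : Finset (Fin n))) := by
  ext i
  simp only [Finset.mem_filter, Finset.mem_univ, true_and, Fintype.mem_piFinset,
    Finset.mem_insert, Finset.mem_singleton]
  constructor <;> intro h k <;> rcases h k with h' | h'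
  · left; exact (fin_val_zero_iff _).mp h'
  · right; exact h'
  · left; rw [h']; simp
  · right; exact h'

lemma sum_cVec_eq_zero [NeZero n] (i' : Fin m → Fin n) (h : 1 ≤ wtTuple i') :
    ∑ i, cVec (n := n) m i' i = 0 := by
  obtain ⟨p, hp⟩ : ∃ p, (i' p : ℕ) ≠ 0 := by
    by_contra hc
    push_neg at hc
    have : wtTuple i' = 0 := by simp [wtTuple, hc]
    omega
  simp only [cVec]
  rw [Finset.sum_boole, filter_preceq_eq, Fintype.card_piFinset, Nat.cast_prod]
  refine Finset.prod_eq_zero (Finset.mem_univ p) ?_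
  have hip : (0 : Fin n) ≠ i' p := fun hh => hp (by rw [← hh]; simp)
  rw [Finset.card_pair hip]
  decide

lemma filter_interval_eq [NeZero n] {k i : Fin m → Fin n} (hki : preceq k i) :
    (Finset.univ.filter fun j : Fin m → Fin n => preceq j i ∧ preceq k j)
      = Fintype.piFinset
          (fun p => if (k p : ℕ) = 0 then ({0, i p} : Finset (Fin n)) else {k p}) := by
  ext j
  simp only [Finset.mem_filter, Finset.mem_univ, true_and, Fintype.mem_piFinset]
  constructor
  · rintro ⟨h2, h1⟩ p
    by_cases hk0 : (k p : ℕ) = 0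
    · simp only [if_pos hk0, Finset.mem_insert, Finset.mem_singleton]
      rcases h2 p with h' | h'
      · left; exact (fin_val_zero_iff _).mp h'
      · right; exact h'
    · simp only [if_neg hk0, Finset.mem_singleton]
      rcases h1 p with h' | h'
      · exact absurd h' hk0
      · exact h'.symm
  · intro h
    constructor <;> intro p <;> have hp := h p
    · split_ifs at hp with h0
      · simp only [Finset.mem_insert, Finset.mem_singleton] at hp
        rcases hp with hp | hp
        · left; rw [hp]; simp
        · right; exact hp
      · simp only [Finset.mem_singleton] at hp
        rcases hki p with h' | h'
        · exact absurd h' h0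
        · right; rw [hp, h']
    · split_ifs at hp with h0
      · left; exact h0
      · simp only [Finset.mem_singleton] at hp
        right; exact hp.symm

lemma single_eq_sum_cVec [NeZero n] (i : Fin m → Fin n) :
    (fun j => if i = j then (1 : ZMod 2) else 0)
      = ∑ j ∈ Finset.univ.filter (fun j => preceq j i), cVec (n := n) m j := by
  funext k
  rw [Finset.sum_apply]
  simp only [cVec]
  rw [Finset.sum_boole, Finset.filter_filter]
  by_cases hki : preceq k i
  · by_cases hik : i = k
    · subst hik
      rw [if_pos rfl]
      rw [filter_interval_eq hki, Fintype.card_piFinset]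
      have : ∀ p, (if (i p : ℕ) = 0 then ({0, i p} : Finset (Fin n)) else {i p}).card = 1 := by
        intro p
        split_ifs with h0
        · have : i p = 0 := (fin_val_zero_iff _).mp h0
          rw [this]; simp
        · simp
      rw [Finset.prod_congr rfl fun p _ => this p]
      simp
    · rw [if_neg hik]
      rw [filter_interval_eq hki, Fintype.card_piFinset]
      obtain ⟨p, hp⟩ : ∃ p, k p ≠ i p := by
        by_contra hc; push_neg at hc; exact hik (funext fun p => (hc p).symm)
      have hk0 : (k p : ℕ) = 0 := by
        rcases hki p with h' | h'
        · exact h'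
        · exact absurd h' hp
      have hip : (i p : ℕ) ≠ 0 := by
        intro h0
        apply hp
        rw [(fin_val_zero_iff _).mp hk0, (fin_val_zero_iff _).mp h0]
      rw [Nat.cast_prod]
      symm
      refine Finset.prod_eq_zero (Finset.mem_univ p) ?_
      rw [if_pos hk0]
      have hip' : (0 : Fin n) ≠ i p := fun hh => hip (by rw [← hh]; simp)
      rw [Finset.card_pair hip']
      decide
  · have hik : i ≠ k := fun h => hki (h ▸ preceq_refl i)
    rw [if_neg hik]
    have : (Finset.univ.filter fun j : Fin m → Fin n => preceq j i ∧ preceq k j) = ∅ := by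
      rw [Finset.filter_eq_empty_iff]
      rintro j - ⟨h1, h2⟩
      exact hki (preceq_trans h2 h1)
    rw [this]
    simp

lemma top_le_span_cVec [NeZero n] :
    ⊤ ≤ Submodule.span (ZMod 2) (Set.range (cVec (n := n) m)) := by
  intro v _
  rw [pi_eq_sum_univ v]
  refine Submodule.sum_mem _ fun i _ => Submodule.smul_mem _ _ ?_
  rw [single_eq_sum_cVec]
  exact Submodule.sum_mem _ fun j _ => Submodule.subset_span ⟨j, rfl⟩

/-- membership of the generators in the Berman code -/
lemma cVec_mem_D (n : ℕ) [NeZero n] : ∀ (m r : ℕ) (i' : Fin m → Fin n),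
    r + 1 ≤ wtTuple i' → cVec m i' ∈ BermanD n m r := by
  intro m
  induction m with
  | zero =>
    intro r i' h
    exact absurd h (by simp [wtTuple])
  | succ m ih =>
    intro r i' h
    have hi' : Fin.snoc (Fin.init i') (i' (Fin.last m)) = i' := Fin.snoc_init_self i'
    set j := Fin.init i' with hj
    set l := i' (Fin.last m) with hl
    have hwt : wtTuple i' = wtTuple j + if (l : ℕ) ≠ 0 then 1 else 0 := by
      rw [← hi']; exact wtTuple_snoc j l
    rw [BermanD]
    split_ifs with h0 h1
    · subst h0
      show ∑ i, cVec (m+1) i' i = 0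
      exact sum_cVec_eq_zero i' h
    · exfalso
      have := wtTuple_le i'
      omega
    · constructor
      · intro b
        rw [← hi', subvec_cVec_snoc]
        split_ifs with hb
        · refine ih (r-1) j ?_
          have : ¬ (m + 1 ≤ r) := h1
          split_ifs at hwt <;> omega
        · exact zero_mem_D n m (r-1)
      · have hs : (fun i'' => ∑ b : Fin n, subvec (cVec (m+1) i') b i'')
            = if (l : ℕ) = 0 then cVec m j else 0 := by
          by_cases hl0 : (l : ℕ) = 0
          · rw [if_pos hl0]
            have hl0' : l = 0 := (fin_val_zero_iff _).mp hl0
            funext x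
            show ∑ b : Fin n, subvec (cVec (m+1) i') b x = cVec m j x
            conv_lhs => rw [← hi']
            simp only [subvec_cVec_snoc, ite_apply, Pi.zero_apply]
            rw [Finset.sum_eq_single (0 : Fin n)]
            · simp
            · intro b _ hb
              rw [if_neg]
              rintro (hb' | hb')
              · exact hb ((fin_val_zero_iff _).mp hb')
              · exact hb (hb'.trans hl0')
            · intro hmem; exact absurd (Finset.mem_univ _) hmem
          · rw [if_neg hl0]
            funext x
            show ∑ b : Fin n, subvec (cVec (m+1) i') b x = 0
            conv_lhs => rw [← hi']
            simp only [subvec_cVec_snoc, ite_apply, Pi.zero_apply]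
            have heq : (Finset.univ.filter fun b : Fin n => (b:ℕ) = 0 ∨ b = l)
                = ({0, l} : Finset (Fin n)) := by
              ext b; simp [fin_val_zero_iff]
            rw [← Finset.sum_filter, heq]
            have hl0' : (0 : Fin n) ≠ l := fun hh => hl0 (by rw [← hh]; simp)
            rw [Finset.sum_pair hl0']
            exact (by decide : ∀ a : ZMod 2, a + a = 0) _
        rw [hs]
        split_ifs with hl0
        · refine ih r j ?_
          split_ifs at hwt <;> omega
        · exact zero_mem_D n m r

/-- The lifting map. -/
def Tmap (n m : ℕ) (l : Fin n) :
    ((Fin m → Fin n) → ZMod 2) →ₗ[ZMod 2] ((Fin (m+1) → Fin n) → ZMod 2) where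
  toFun w := fun i =>
    if ((i (Fin.last m) : ℕ) = 0 ∨ i (Fin.last m) = l) then w (Fin.init i) else 0
  map_add' u v := by
    funext i
    by_cases h : ((i (Fin.last m) : ℕ) = 0 ∨ i (Fin.last m) = l) <;> simp [h]
  map_smul' c v := by
    funext i
    by_cases h : ((i (Fin.last m) : ℕ) = 0 ∨ i (Fin.last m) = l) <;> simp [h]

lemma Tmap_apply (l : Fin n) (w : (Fin m → Fin n) → ZMod 2) (i : Fin (m+1) → Fin n) :
    Tmap n m l w i
      = if ((i (Fin.last m) : ℕ) = 0 ∨ i (Fin.last m) = l) then w (Fin.init i) else 0 := rfl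

lemma Tmap_cVec (l : Fin n) (j : Fin m → Fin n) :
    Tmap n m l (cVec m j) = cVec (m+1) (Fin.snoc j l) := by
  funext i
  rw [Tmap_apply]
  have hpre : preceq i (Fin.snoc j l)
      ↔ preceq (Fin.init i) j ∧ ((i (Fin.last m) : ℕ) = 0 ∨ i (Fin.last m) = l) := by
    conv_lhs => rw [← Fin.snoc_init_self i]
    exact preceq_snoc_iff _ _ _ _
  show _ = if preceq i (Fin.snoc j l) then (1:ZMod 2) else 0
  simp only [cVec, hpre]
  by_cases h : ((i (Fin.last m) : ℕ) = 0 ∨ i (Fin.last m) = l) <;>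
    by_cases hp : preceq (Fin.init i) j <;> simp [hp, h]

lemma decomp [NeZero n] (v : (Fin (m+1) → Fin n) → ZMod 2) :
    v = Tmap n m 0 (fun x => ∑ l : Fin n, subvec v l x)
      + ∑ l ∈ Finset.univ.erase (0 : Fin n), Tmap n m l (subvec v l) := by
  funext i
  have hvi : v i = subvec v (i (Fin.last m)) (Fin.init i) := by
    rw [subvec, Fin.snoc_init_self]
  have h2 : ∀ a : ZMod 2, a + a = 0 := by decide
  simp only [Pi.add_apply, Finset.sum_apply]
  by_cases hb : (i (Fin.last m) : ℕ) = 0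
  · have hb0 : i (Fin.last m) = 0 := (fin_val_zero_iff _).mp hb
    have hterm0 : Tmap n m 0 (fun x => ∑ l : Fin n, subvec v l x) i
        = ∑ l : Fin n, subvec v l (Fin.init i) := by
      rw [Tmap_apply, if_pos (Or.inl hb)]
    have hterms : ∀ l ∈ Finset.univ.erase (0 : Fin n),
        Tmap n m l (subvec v l) i = subvec v l (Fin.init i) := by
      intro l _
      rw [Tmap_apply, if_pos (Or.inl hb)]
    rw [hvi, hb0, hterm0, Finset.sum_congr rfl hterms]
    rw [← Finset.add_sum_erase _ _ (Finset.mem_univ (0 : Fin n))]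
    rw [add_assoc, h2, add_zero]
  · have hb0 : i (Fin.last m) ≠ 0 := fun h => hb (by rw [h]; simp)
    have hterm0 : Tmap n m 0 (fun x => ∑ l : Fin n, subvec v l x) i = 0 := by
      rw [Tmap_apply, if_neg]
      rintro (h | h)
      · exact hb h
      · exact hb0 h
    rw [hvi, hterm0, zero_add, Finset.sum_eq_single (i (Fin.last m))]
    · rw [Tmap_apply, if_pos (Or.inr rfl)]
    · intro l _ hne
      rw [Tmap_apply, if_neg]
      rintro (h | h)
      · exact hb h
      · exact hne h.symm
    · intro hmem
      exact absurd (Finset.mem_erase.mpr ⟨hb0, Finset.mem_univ _⟩) hmem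

lemma tmap_mem [NeZero n] (l : Fin n) (a b : ℕ)
    (hab : ∀ j : Fin m → Fin n, a ≤ wtTuple j → b ≤ wtTuple (Fin.snoc j l))
    (w : (Fin m → Fin n) → ZMod 2)
    (hw : w ∈ Submodule.span (ZMod 2) (cVec (n := n) m '' {j | a ≤ wtTuple j})) :
    Tmap n m l w ∈ Submodule.span (ZMod 2)
      (cVec (n := n) (m+1) '' {i | b ≤ wtTuple i}) := by
  have h1 : Tmap n m l w ∈ Submodule.map (Tmap n m l)
      (Submodule.span (ZMod 2) (cVec (n := n) m '' {j | a ≤ wtTuple j})) :=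
    Submodule.mem_map_of_mem hw
  rw [← Submodule.span_image] at h1
  refine Submodule.span_mono ?_ h1
  rintro _ ⟨_, ⟨j, hj, rfl⟩, rfl⟩
  exact ⟨Fin.snoc j l, hab j hj, (Tmap_cVec l j).symm⟩

/-- snoc as an equivalence, for sum reindexing. -/
def snocEquiv (n m : ℕ) : ((Fin m → Fin n) × Fin n) ≃ (Fin (m+1) → Fin n) where
  toFun p := Fin.snoc p.1 p.2
  invFun i := (Fin.init i, i (Fin.last m))
  left_inv := by rintro ⟨a, b⟩; simp
  right_inv i := Fin.snoc_init_self i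

lemma sum_snoc (v : (Fin (m+1) → Fin n) → ZMod 2) :
    ∑ i, v i = ∑ i' : Fin m → Fin n, ∑ l : Fin n, subvec v l i' := by
  calc ∑ i, v i = ∑ p : (Fin m → Fin n) × Fin n, v (snocEquiv n m p) :=
        ((snocEquiv n m).sum_comp v).symm
    _ = ∑ i' : Fin m → Fin n, ∑ l : Fin n, subvec v l i' := by
        rw [Fintype.sum_prod_type]; rfl

lemma D_le_span (n : ℕ) [NeZero n] : ∀ (m r : ℕ),
    BermanD n m r ⊆
      ↑(Submodule.span (ZMod 2) (cVec (n := n) m '' {i' | r + 1 ≤ wtTuple i'})) := by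
  intro m
  induction m with
  | zero =>
    intro r v hv
    rw [BermanD] at hv
    simp only [Set.mem_singleton_iff] at hv
    rw [hv]
    exact Submodule.zero_mem _
  | succ m ih =>
    intro r v hv
    by_cases h1 : m + 1 ≤ r
    · have hv0 : v = 0 := by
        rw [BermanD] at hv
        rw [if_neg (by omega), if_pos h1] at hv
        simpa using hv
      rw [hv0]; exact Submodule.zero_mem _
    · -- r ≤ m
      have hs : (fun i' => ∑ l : Fin n, subvec v l i') ∈ BermanD n m r := by
        by_cases h0 : r = 0
        · subst h0
          have hv' : ∑ i, v i = 0 := by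
            rw [BermanD] at hv; simpa using hv
          cases m with
          | zero =>
            rw [BermanD]
            simp only [Set.mem_singleton_iff]
            funext x
            have hx : ∀ y : Fin 0 → Fin n, y = x := fun y => Subsingleton.elim y x
            calc (fun i' => ∑ l : Fin n, subvec v l i') x
                = ∑ i' : Fin 0 → Fin n, ∑ l : Fin n, subvec v l i' := by
                  rw [Fintype.sum_eq_single x (fun y hy => absurd (hx y) hy)]
              _ = ∑ i, v i := (sum_snoc v).symm
              _ = 0 := hv'
          | succ m' =>
            rw [BermanD, if_pos rfl]
            show ∑ i', ∑ l : Fin n, subvec v l i' = 0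
            rw [← sum_snoc v]
            exact hv'
        · rw [BermanD, if_neg h0, if_neg h1] at hv
          exact hv.2
      have hsub : ∀ l : Fin n, subvec v l ∈
          Submodule.span (ZMod 2) (cVec (n := n) m '' {j | r ≤ wtTuple j}) := by
        intro l
        by_cases h0 : r = 0
        · subst h0
          have himg : cVec (n := n) m '' {j | 0 ≤ wtTuple j}
              = Set.range (cVec (n := n) m) := by
            rw [show {j : Fin m → Fin n | 0 ≤ wtTuple j} = Set.univ from
              Set.eq_univ_of_forall fun _ => Nat.zero_le _, Set.image_univ]
          rw [himg]
          exact top_le_span_cVec trivial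
        · rw [BermanD, if_neg h0, if_neg h1] at hv
          have := ih (r-1) (hv.1 l)
          have hrr : r - 1 + 1 = r := by omega
          rwa [hrr] at this
      have hss := ih r hs
      rw [decomp v]
      refine Submodule.add_mem _ ?_ ?_
      · refine tmap_mem 0 (r+1) (r+1) ?_ _ hss
        intro j hj
        rw [wtTuple_snoc]
        simpa using hj
      · refine Submodule.sum_mem _ fun l hl => ?_
        refine tmap_mem l r (r+1) ?_ _ (hsub l)
        intro j hj
        rw [wtTuple_snoc]
        have hl0 : (l : ℕ) ≠ 0 := by
          intro h
          exact (Finset.mem_erase.mp hl).1 ((fin_val_zero_iff _).mp h)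
        rw [if_pos hl0]
        omega

end Aux

/-- `{c_m(i') : wt(i') ≥ r+1}` is an `F_2`-basis of `D_n(r,m)`. -/
theorem berman_basis_D (n m r : ℕ) (hn : 2 ≤ n) (hm : 1 ≤ m) (hr : r ≤ m - 1) :
    LinearIndependent (ZMod 2)
      (fun i' : {i' : Fin m → Fin n // r + 1 ≤ wtTuple i'} => cVec (n := n) m i'.1) ∧
    (↑(Submodule.span (ZMod 2)
        (cVec (n := n) m '' {i' : Fin m → Fin n | r + 1 ≤ wtTuple i'})) :
      Set ((Fin m → Fin n) → ZMod 2)) = BermanD n m r := by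
  haveI : NeZero n := ⟨by omega⟩
  haveI : Fact (Nat.Prime 2) := ⟨Nat.prime_two⟩
  constructor
  · have hfull : LinearIndependent (ZMod 2) (cVec (n := n) m) := by
      refine linearIndependent_of_top_le_span_of_card_eq_finrank top_le_span_cVec ?_
      rw [Module.finrank_pi]
    exact hfull.comp _ Subtype.val_injective
  · apply Set.Subset.antisymm
    · have hle : Submodule.span (ZMod 2)
          (cVec (n := n) m '' {i' : Fin m → Fin n | r + 1 ≤ wtTuple i'}) ≤ Dmod n m r := by
        rw [Submodule.span_le]
        rintro _ ⟨i', hi', rfl⟩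
        exact cVec_mem_D n m r i' hi'
      exact hle
    · exact D_le_span n m r
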